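/- Let b ∈ S², let R, R_d be smooth curves in SO(3) with Ṙ = R hat(Ω) and Ṙ_d = hat(ω_d) R_d, and let r_d(t) = R_d(t) b, e_Ω = Ω − Rᵀω_d, Ψ(t) = 1 − (R(t)b) · r_d(t), e_r(t) = (R(t)ᵀ r_d(t)) × b. Then dΨ/dt = e_r · e_Ω. -/

import Mathlib

open Matrix

attribute [local instance] Matrix.normedAddCommGroup Matrix.normedSpace

/-- The hat map sending `x ∈ ℝ³` to the skew-symmetric matrix with `hat x * v = x ⨯₃ v`. -/
def hat (x : Fin 3 → ℝ) : Matrix (Fin 3) (Fin 3) ℝ :=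
  !![0, -x 2, x 1; x 2, 0, -x 0; -x 1, x 0, 0]

/-- Euclidean norm on `ℝ³`. -/
noncomputable def enorm (v : Fin 3 → ℝ) : ℝ := Real.sqrt (v ⬝ᵥ v)

lemma hat_mulVec (x v : Fin 3 → ℝ) : (hat x) *ᵥ v = x ⨯₃ v := by
  funext i
  fin_cases i <;>
    simp [hat, cross_apply, mulVec, dotProduct, Fin.sum_univ_three] <;> ring

lemma cross_mulVec_adj (A : Matrix (Fin 3) (Fin 3) ℝ) (u v : Fin 3 → ℝ) :
    (A *ᵥ u) ⨯₃ (A *ᵥ v) = (A.adjugate)ᵀ *ᵥ (u ⨯₃ v) := by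
  funext i
  fin_cases i <;>
    simp [cross_apply, mulVec, dotProduct, Fin.sum_univ_three, adjugate_fin_three,
      transpose_apply] <;> ring

lemma cross_mulVec_SO (A : Matrix (Fin 3) (Fin 3) ℝ) (hO : Aᵀ * A = 1) (hd : A.det = 1)
    (u v : Fin 3 → ℝ) : (A *ᵥ u) ⨯₃ (A *ᵥ v) = A *ᵥ (u ⨯₃ v) := by
  have h1 : A * A.adjugate = 1 := by rw [Matrix.mul_adjugate, hd, one_smul]
  have h2 : A.adjugate = Aᵀ := by
    rw [← Matrix.inv_eq_right_inv h1, Matrix.inv_eq_left_inv hO]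
  rw [cross_mulVec_adj, h2, transpose_transpose]

lemma dot_mulVec_SO (A : Matrix (Fin 3) (Fin 3) ℝ) (hO : Aᵀ * A = 1) (x y : Fin 3 → ℝ) :
    (A *ᵥ x) ⬝ᵥ (A *ᵥ y) = x ⬝ᵥ y := by
  rw [Matrix.dotProduct_mulVec, ← Matrix.mulVec_transpose, Matrix.mulVec_mulVec, hO,
    Matrix.one_mulVec]

lemma entry_hasDerivAt {R : ℝ → Matrix (Fin 3) (Fin 3) ℝ} {R' : Matrix (Fin 3) (Fin 3) ℝ}
    {t : ℝ} (h : HasDerivAt R R' t) (i j : Fin 3) :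
    HasDerivAt (fun s => R s i j) (R' i j) t := by
  exact (hasDerivAt_pi.mp ((hasDerivAt_pi.mp h) i)) j

lemma hasDerivAt_mulVec_dot {R Rd : ℝ → Matrix (Fin 3) (Fin 3) ℝ}
    {R' Rd' : Matrix (Fin 3) (Fin 3) ℝ} {t : ℝ} (b : Fin 3 → ℝ)
    (hR : HasDerivAt R R' t) (hRd : HasDerivAt Rd Rd' t) :
    HasDerivAt (fun s => (R s *ᵥ b) ⬝ᵥ (Rd s *ᵥ b))
      ((R' *ᵥ b) ⬝ᵥ (Rd t *ᵥ b) + (R t *ᵥ b) ⬝ᵥ (Rd' *ᵥ b)) t := by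
  have h1 : ∀ i : Fin 3, HasDerivAt (fun s => (R s *ᵥ b) i) ((R' *ᵥ b) i) t := by
    intro i
    have : HasDerivAt (fun s => ∑ j, R s i j * b j) (∑ j, R' i j * b j) t :=
      HasDerivAt.fun_sum fun j _ => (entry_hasDerivAt hR i j).mul_const (b j)
    simpa [mulVec, dotProduct] using this
  have h2 : ∀ i : Fin 3, HasDerivAt (fun s => (Rd s *ᵥ b) i) ((Rd' *ᵥ b) i) t := by
    intro i
    have : HasDerivAt (fun s => ∑ j, Rd s i j * b j) (∑ j, Rd' i j * b j) t :=
      HasDerivAt.fun_sum fun j _ => (entry_hasDerivAt hRd i j).mul_const (b j)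
    simpa [mulVec, dotProduct] using this
  have : HasDerivAt (fun s => ∑ i, (R s *ᵥ b) i * (Rd s *ᵥ b) i)
      (∑ i, ((R' *ᵥ b) i * (Rd t *ᵥ b) i + (R t *ᵥ b) i * (Rd' *ᵥ b) i)) t :=
    HasDerivAt.fun_sum fun i _ => (h1 i).mul (h2 i)
  simpa [dotProduct, Finset.sum_add_distrib] using this

theorem deriv_Psi_eq_er_dot_eOmega
    (b : Fin 3 → ℝ) (hb : _root_.enorm b = 1)
    (R Rd : ℝ → Matrix (Fin 3) (Fin 3) ℝ) (Ω ωd : ℝ → Fin 3 → ℝ)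
    (hSO : ∀ t, (R t)ᵀ * R t = 1 ∧ (R t).det = 1)
    (hSOd : ∀ t, (Rd t)ᵀ * Rd t = 1 ∧ (Rd t).det = 1)
    (hR : ∀ t, HasDerivAt R (R t * hat (Ω t)) t)
    (hRd : ∀ t, HasDerivAt Rd (hat (ωd t) * Rd t) t)
    (t : ℝ) :
    HasDerivAt (fun s => 1 - ((R s).mulVec b) ⬝ᵥ ((Rd s).mulVec b))
      ((((R t)ᵀ.mulVec ((Rd t).mulVec b)) ⨯₃ b) ⬝ᵥ (Ω t - (R t)ᵀ.mulVec (ωd t))) t := by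
  obtain ⟨hO, hd⟩ := hSO t
  have hRR : R t * (R t)ᵀ = 1 := mul_eq_one_comm.mp hO
  have hder := (hasDerivAt_mulVec_dot b (hR t) (hRd t)).const_sub 1
  refine hder.congr_deriv ?_
  set u := (R t)ᵀ *ᵥ ((Rd t) *ᵥ b) with hu
  set w := (R t)ᵀ *ᵥ (ωd t) with hw
  have hub : (Rd t) *ᵥ b = R t *ᵥ u := by
    rw [hu, Matrix.mulVec_mulVec, hRR, Matrix.one_mulVec]
  have hwb : ωd t = R t *ᵥ w := by
    rw [hw, Matrix.mulVec_mulVec, hRR, Matrix.one_mulVec]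
  have t1 : ((R t * hat (Ω t)) *ᵥ b) ⬝ᵥ ((Rd t) *ᵥ b) = (Ω t ⨯₃ b) ⬝ᵥ u := by
    rw [← Matrix.mulVec_mulVec, hat_mulVec, hub, dot_mulVec_SO _ hO]
  have t2 : ((R t) *ᵥ b) ⬝ᵥ ((hat (ωd t) * Rd t) *ᵥ b) = b ⬝ᵥ (w ⨯₃ u) := by
    rw [← Matrix.mulVec_mulVec, hat_mulVec, hub]
    rw [hwb, cross_mulVec_SO _ hO hd, dot_mulVec_SO _ hO]
  rw [t1, t2]
  simp only [cross_apply, dotProduct, Fin.sum_univ_three, Pi.sub_apply,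
    Matrix.cons_val_zero, Matrix.cons_val_one, Matrix.head_cons, Matrix.cons_val_two,
    Matrix.tail_cons]
  ring
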